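/- Fix δ > 0 and a real constant m. Let T^+_α be the self-adjoint operator in L²(0,δ) associated with the quadratic form τ^+_α(f,f) = ∫₀^δ |f'(t)|² dt − (α + m)|f(0)|² on the domain {f ∈ H¹(0,δ) : f(δ) = 0}, and let ψ_α be an L²-normalized eigenfunction corresponding to the lowest eigenvalue E₁(T^+_α). Then |ψ_α(0)|² = O(α) as α → +∞. -/

import Mathlib

open MeasureTheory Filter Topology

noncomputable section

lemma ftc_Ioo (δ : ℝ) (hδ : 0 < δ) (u u' : ℝ → ℝ)
    (hu : ∀ x ∈ Set.Icc (0:ℝ) δ, HasDerivAt u (u' x) x)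
    (hc : ContinuousOn u' (Set.Icc (0:ℝ) δ)) :
    ∫ t in Set.Ioo (0:ℝ) δ, u' t = u δ - u 0 := by
  rw [← MeasureTheory.integral_Ioc_eq_integral_Ioo, ← intervalIntegral.integral_of_le hδ.le]
  exact intervalIntegral.integral_eq_sub_of_hasDerivAt
    (by rwa [Set.uIcc_of_le hδ.le])
    ((by rwa [Set.uIcc_of_le hδ.le] :
      ContinuousOn u' (Set.uIcc 0 δ)).intervalIntegrable)

lemma groundState_core (δ m : ℝ) (hδ : 0 < δ) (α : ℝ) (E a : ℝ) (f f' : ℝ → ℝ)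
    (hd1 : ∀ t ∈ Set.Icc (0 : ℝ) δ, HasDerivAt f (f' t) t)
    (hd2 : ∀ t ∈ Set.Icc (0 : ℝ) δ, HasDerivAt f' (-E * f t) t)
    (hrob : f' 0 = -a * f 0)
    (hbd : f δ = 0) (hnorm : (∫ t in Set.Ioo (0 : ℝ) δ, f t ^ 2) = 1)
    (ha : 1 + 2/δ ≤ a) :
    f 0 ^ 2 ≤ max (2/δ) (4*a) := by
  have hapos : 0 < a := by
    have : 0 < 2/δ := by positivity
    linarith
  have h0mem : (0:ℝ) ∈ Set.Icc (0:ℝ) δ := ⟨le_refl 0, hδ.le⟩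
  have hδmem : δ ∈ Set.Icc (0:ℝ) δ := ⟨hδ.le, le_refl δ⟩
  -- continuity
  have hfc : ContinuousOn f (Set.Icc (0:ℝ) δ) :=
    fun x hx => (hd1 x hx).continuousAt.continuousWithinAt
  have hf'c : ContinuousOn f' (Set.Icc (0:ℝ) δ) :=
    fun x hx => (hd2 x hx).continuousAt.continuousWithinAt
  set P := f 0 ^ 2 with hPdef
  set F := ∫ t in Set.Ioo (0:ℝ) δ, f' t ^ 2 with hFdef
  -- integrability
  have hif2 : IntegrableOn (fun t => f t ^ 2) (Set.Ioo (0:ℝ) δ) :=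
    ((hfc.pow 2).integrableOn_Icc).mono_set Set.Ioo_subset_Icc_self
  have hif'2 : IntegrableOn (fun t => f' t ^ 2) (Set.Ioo (0:ℝ) δ) :=
    ((hf'c.pow 2).integrableOn_Icc).mono_set Set.Ioo_subset_Icc_self
  -- Equation 1 : F = a*P + E  (integration by parts of ∫ f'' f)
  have eq1 : F - E = a * P := by
    have hu : ∀ x ∈ Set.Icc (0:ℝ) δ,
        HasDerivAt (fun t => f t * f' t) (f' x ^ 2 - E * f x ^ 2) x := by
      intro x hx
      have h := (hd1 x hx).mul (hd2 x hx)
      exact h.congr_deriv (by ring)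
    have hc : ContinuousOn (fun x => f' x ^ 2 - E * f x ^ 2) (Set.Icc (0:ℝ) δ) :=
      (hf'c.pow 2).sub (continuousOn_const.mul (hfc.pow 2))
    have h := ftc_Ioo δ hδ _ _ hu hc
    rw [MeasureTheory.integral_sub hif'2 (hif2.const_mul E)] at h
    rw [MeasureTheory.integral_const_mul] at h
    rw [hnorm, hbd, hrob] at h
    linear_combination h
  -- Constancy of f'^2 + E f^2
  have hg : ∀ x ∈ Set.Icc (0:ℝ) δ,
      f' x ^ 2 + E * f x ^ 2 = a^2 * P + E * P := by
    have hconst := constant_of_has_deriv_right_zero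
      (f := fun t => f' t ^ 2 + E * f t ^ 2)
      (a := (0:ℝ)) (b := δ)
      ((hf'c.pow 2).add (continuousOn_const.mul (hfc.pow 2)))
      (by
        intro x hx
        have hx' : x ∈ Set.Icc (0:ℝ) δ := Set.Ico_subset_Icc_self hx
        have h := ((hd2 x hx').pow 2).add (((hd1 x hx').pow 2).const_mul E)
        have h0 : HasDerivAt (fun t => f' t ^ 2 + E * f t ^ 2) 0 x := by
          exact h.congr_deriv (by push_cast; ring)
        exact h0.hasDerivWithinAt)
    intro x hx
    have := hconst x hx
    rw [this, hrob]; ring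
  -- Equation 3 : F + E = δ * (a^2*P + E*P)
  have eq3 : F + E = δ * (a^2 * P + E * P) := by
    have hcongr : ∫ t in Set.Ioo (0:ℝ) δ, (f' t ^ 2 + E * f t ^ 2)
        = ∫ t in Set.Ioo (0:ℝ) δ, (a^2 * P + E * P : ℝ) := by
      refine MeasureTheory.setIntegral_congr_fun measurableSet_Ioo ?_
      intro t ht
      exact hg t (Set.Ioo_subset_Icc_self ht)
    rw [MeasureTheory.integral_add hif'2 (hif2.const_mul E),
      MeasureTheory.integral_const_mul, hnorm, MeasureTheory.setIntegral_const] at hcongr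
    rw [Real.volume_real_Ioo_of_le (by linarith), smul_eq_mul] at hcongr
    rw [show δ - 0 = δ by ring] at hcongr
    linarith [hcongr]
  -- FTC for f^2 :  ∫ 2 f f' = -P
  have hsq : ∫ t in Set.Ioo (0:ℝ) δ, 2 * f t * f' t = -P := by
    have hu : ∀ x ∈ Set.Icc (0:ℝ) δ,
        HasDerivAt (fun t => f t ^ 2) (2 * f x * f' x) x := by
      intro x hx
      have h := (hd1 x hx).pow 2
      exact h.congr_deriv (by push_cast; ring)
    have hc : ContinuousOn (fun x => 2 * f x * f' x) (Set.Icc (0:ℝ) δ) :=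
      (continuousOn_const.mul hfc).mul hf'c
    have h := ftc_Ioo δ hδ _ _ hu hc
    rw [hbd] at h
    simpa using h
  -- Young : 2*a*P ≤ F + 4*a^2
  have young : 2 * a * P ≤ F + 4 * a ^ 2 := by
    have hmono : ∫ t in Set.Ioo (0:ℝ) δ, (-(2*a)) * (2 * f t * f' t)
        ≤ ∫ t in Set.Ioo (0:ℝ) δ, (f' t ^ 2 + 4 * a^2 * f t ^ 2) := by
      refine MeasureTheory.setIntegral_mono_on ?_ ?_ measurableSet_Ioo ?_
      · exact ((continuousOn_const.mul ((continuousOn_const.mul hfc).mul hf'c)).integrableOn_Icc).mono_set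
          Set.Ioo_subset_Icc_self
      · exact hif'2.add (hif2.const_mul _)
      · intro t ht
        nlinarith [sq_nonneg (f' t + 2 * a * f t)]
    rw [MeasureTheory.integral_const_mul, hsq,
      MeasureTheory.integral_add hif'2 (hif2.const_mul _),
      MeasureTheory.integral_const_mul, hnorm] at hmono
    nlinarith [hmono]
  have hPnonneg : 0 ≤ P := sq_nonneg _
  -- case analysis
  by_cases hP : P ≤ 2/δ
  · exact le_trans hP (le_max_left _ _)
  · push_neg at hP
    have hδP : 2 < δ * P := by
      rw [div_lt_iff₀ hδ] at hP; linarith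
    have key : E * (2 - δ * P) = a * P * (δ * a - 1) := by nlinarith [eq1, eq3]
    have hrhs : 0 < a * P * (δ * a - 1) := by
      have h1 : 0 < P := by
        have : 0 < 2/δ := by positivity
        linarith
      have h2 : 0 < δ * a - 1 := by
        have h3 : δ * (2/δ) = 2 := by field_simp
        nlinarith [mul_le_mul_of_nonneg_left ha hδ.le]
      positivity
    have hE : E < 0 := by nlinarith
    have : P ≤ 4 * a := by nlinarith
    exact le_trans this (le_max_right _ _)


/-- Rayleigh quotient of the quadratic form
`τ⁺_α(f) = ∫₀^δ |f'(t)|² dt − (α+m)|f(0)|²` of the operator `T⁺_α` in `L²(0,δ)`. -/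
def rayleighT (δ m α : ℝ) (f : ℝ → ℝ) : ℝ :=
  ((∫ t in Set.Ioo (0 : ℝ) δ, deriv f t ^ 2) - (α + m) * f 0 ^ 2) /
    ∫ t in Set.Ioo (0 : ℝ) δ, f t ^ 2

/-- `j`-th eigenvalue (`j ≥ 1`) of the operator `T⁺_α` in `L²(0,δ)` associated with the
form `τ⁺_α(f) = ∫₀^δ |f'(t)|² dt − (α+m)|f(0)|²` on `{f ∈ H¹(0,δ) : f(δ) = 0}`, via the
Courant–Fischer min-max principle over `j`-dimensional subspaces of Lipschitz functions
vanishing at `δ` (a form core). -/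
def oneDimEV (δ m α : ℝ) (j : ℕ) : ℝ :=
  sInf { c : ℝ | ∃ V : Submodule ℝ (ℝ → ℝ),
    Module.finrank ℝ V = j ∧
    (∀ f ∈ V, (∃ K, LipschitzWith K f) ∧ f δ = 0) ∧
    (∀ f ∈ V, f ≠ 0 → 0 < ∫ t in Set.Ioo (0 : ℝ) δ, f t ^ 2) ∧
    c = sSup { r : ℝ | ∃ f ∈ V, f ≠ 0 ∧ r = rayleighT δ m α f } }

/-- `f` is an `L²`-normalized eigenfunction of `T⁺_α` for its lowest eigenvalue
`E₁(T⁺_α)`: it solves `−f'' = E₁ f` on `[0,δ]` with the Robin condition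
`f'(0) = −(α+m) f(0)` and the Dirichlet condition `f(δ) = 0`, and `∫₀^δ f² = 1`. -/
def IsGroundState (δ m α : ℝ) (f : ℝ → ℝ) : Prop :=
  (∃ f' : ℝ → ℝ,
    (∀ t ∈ Set.Icc (0 : ℝ) δ, HasDerivAt f (f' t) t) ∧
    (∀ t ∈ Set.Icc (0 : ℝ) δ, HasDerivAt f' (-(oneDimEV δ m α 1) * f t) t) ∧
    f' 0 = -(α + m) * f 0) ∧
  f δ = 0 ∧ (∫ t in Set.Ioo (0 : ℝ) δ, f t ^ 2) = 1

/-- **Lemma 2, boundary value bound.** If `ψ_α` is a normalized ground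
state of `T⁺_α`, then `|ψ_α(0)|² = O(α)` as `α → +∞`. -/
theorem oneDim_ground_state_boundary_value (δ m : ℝ) (hδ : 0 < δ)
    (ψ : ℝ → ℝ → ℝ) (hψ : ∀ α : ℝ, IsGroundState δ m α (ψ α)) :
    ∃ C α₀ : ℝ, 0 < C ∧ ∀ α : ℝ, α₀ ≤ α → ψ α 0 ^ 2 ≤ C * α := by
  refine ⟨8, |m| + 1 + 2/δ, by norm_num, fun α hα => ?_⟩
  obtain ⟨⟨f', hd1, hd2, hrob⟩, hbd, hnorm⟩ := hψ α
  have hδ2 : 0 < 2/δ := by positivity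
  have hm : -|m| ≤ m := neg_abs_le m
  have hm' : m ≤ |m| := le_abs_self m
  have hαpos : 0 < α := by linarith [abs_nonneg m]
  have ha : 1 + 2/δ ≤ α + m := by linarith
  have hmain := groundState_core δ m hδ α (oneDimEV δ m α 1) (α + m) (ψ α) f'
    hd1 hd2 hrob hbd hnorm ha
  refine le_trans hmain (max_le ?_ ?_)
  · linarith [abs_nonneg m]
  · linarith

end
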